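/- Let n ≥ 1, let d₁, …, dₙ be nonzero real numbers, and let B be a real n×n matrix with entries bᵢⱼ. Index ℝ^{2n} by Fin n ⊕ Fin n and let A be the 2n×2n block matrix A = [[0, D⁻¹], [B, 0]], where D = diag(d₁, …, dₙ). For vectors v₁, …, vₙ ∈ ℝ^{2n} define ω₁(v₁, …, vₙ) = det M with Mᵢₖ = (vₖ)_{inl i}; ω₂(v₁, …, vₙ) = Σ_{j=1}^{n} (1/dⱼ) det M⁽ʲ⁾, where M⁽ʲ⁾ replaces the j-th row of M by the coordinates (vₖ)_{inr j}; and ω₃(v₁, …, vₙ) = Σ_{1 ≤ j < k ≤ n} (2/(dⱼ dₖ)) det M⁽ʲᵏ⁾, where M⁽ʲᵏ⁾ replaces the j-th and k-th rows of M by the coordinates (vₖ′)_{inr j} and (vₖ′)_{inr k} respectively. Then Σ_{j=1}^{n} ω₂(v₁, …, A·vⱼ, …, vₙ) = (b₁₁/d₁ + ⋯ + bₙₙ/dₙ) · ω₁(v₁, …, vₙ) + ω₃(v₁, …, vₙ) for all v₁, …, vₙ ∈ ℝ^{2n}. -/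

import Mathlib

/-- The block matrix `A = [[0, D⁻¹], [B, 0]]` with `D = diag (d₁, …, dₙ)`, indexed by
`Fin n ⊕ Fin n`. -/
noncomputable def blockA {n : ℕ} (d : Fin n → ℝ) (B : Matrix (Fin n) (Fin n) ℝ) :
    Matrix (Fin n ⊕ Fin n) (Fin n ⊕ Fin n) ℝ :=
  Matrix.fromBlocks 0 (Matrix.diagonal fun i => (d i)⁻¹) B 0

/-- `ω₁ (v₁, …, vₙ) = det M` where `Mᵢₖ = (vₖ)_{inl i}`. -/
noncomputable def omega1 {n : ℕ} (v : Fin n → (Fin n ⊕ Fin n → ℝ)) : ℝ :=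
  Matrix.det (Matrix.of fun i k => v k (Sum.inl i))

/-- `ω₂ (v₁, …, vₙ) = ∑ⱼ (1/dⱼ) det M⁽ʲ⁾` where `M⁽ʲ⁾` replaces the `j`-th row of `M` by the
coordinates `(vₖ)_{inr j}`. -/
noncomputable def omega2 {n : ℕ} (d : Fin n → ℝ) (v : Fin n → (Fin n ⊕ Fin n → ℝ)) : ℝ :=
  ∑ j, (d j)⁻¹ * Matrix.det (Matrix.of fun i k =>
    if i = j then v k (Sum.inr j) else v k (Sum.inl i))

/-- `ω₃ (v₁, …, vₙ) = ∑_{j < k} (2/(dⱼ dₖ)) det M⁽ʲᵏ⁾` where `M⁽ʲᵏ⁾` replaces the `j`-th and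
`k`-th rows of `M` by the coordinates `(v₋)_{inr j}` and `(v₋)_{inr k}` respectively. -/
noncomputable def omega3 {n : ℕ} (d : Fin n → ℝ) (v : Fin n → (Fin n ⊕ Fin n → ℝ)) : ℝ :=
  ∑ j, ∑ k, if j < k then
    (2 / (d j * d k)) * Matrix.det (Matrix.of fun i c =>
      if i = j then v c (Sum.inr j)
      else if i = k then v c (Sum.inr k)
      else v c (Sum.inl i))
  else 0


open Matrix

private lemma key_det {n : ℕ} (M : Matrix (Fin n) (Fin n) ℝ) (k m : Fin n) :
    (M.updateCol m (Pi.single k 1)).det = (M.updateRow k (Pi.single m 1)).det := by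
  rw [← cramer_apply, ← adjugate_apply]
  have h1 : adjugate Mᵀ k m = cramer M (Pi.single k 1) m := by
    rw [adjugate_def]; simp
  have h2 : adjugate Mᵀ k m = adjugate M m k := by
    rw [← adjugate_transpose]; rfl
  rw [← h1, h2]

private lemma row_expand {n : ℕ} (M : Matrix (Fin n) (Fin n) ℝ) (k : Fin n) (w : Fin n → ℝ) :
    (M.updateRow k w).det = ∑ m, w m * (M.updateRow k (Pi.single m 1)).det := by
  have cr : ∀ u : Fin n → ℝ, (M.updateRow k u).det = cramer Mᵀ u k := by
    intro u
    rw [cramer_apply, updateCol_transpose, det_transpose]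
  have hw : w = ∑ m, w m • (Pi.single m (1 : ℝ) : Fin n → ℝ) := by
    ext i; simp [Pi.single_apply]
  conv_lhs => rw [cr, hw, map_sum]
  simp only [_root_.map_smul, Finset.sum_apply, Pi.smul_apply, smul_eq_mul, cr]

private lemma col_expand {n : ℕ} (M : Matrix (Fin n) (Fin n) ℝ) (m : Fin n) (c : Fin n → ℝ) :
    (M.updateCol m c).det = ∑ k, c k * (M.updateCol m (Pi.single k 1)).det := by
  have hc : c = ∑ k, c k • (Pi.single k (1 : ℝ) : Fin n → ℝ) := by
    ext i; simp [Pi.single_apply]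
  conv_lhs => rw [← cramer_apply, hc, map_sum]
  simp only [_root_.map_smul, Finset.sum_apply, Pi.smul_apply, smul_eq_mul, ← cramer_apply]

theorem stmt7 (n : ℕ) (hn : 1 ≤ n) (d : Fin n → ℝ) (hd : ∀ i, d i ≠ 0)
    (B : Matrix (Fin n) (Fin n) ℝ)
    (v : Fin n → (Fin n ⊕ Fin n → ℝ)) :
    ∑ j, omega2 d (Function.update v j ((blockA d B).mulVec (v j))) =
      (∑ i, B i i / d i) * omega1 v + omega3 d v := by
  classical
  set X : Matrix (Fin n) (Fin n) ℝ := Matrix.of fun i k => v k (Sum.inl i) with hX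
  set Y : Matrix (Fin n) (Fin n) ℝ := Matrix.of fun i k => v k (Sum.inr i) with hY
  set Mj : Fin n → Matrix (Fin n) (Fin n) ℝ := fun j => X.updateRow j (Y j) with hMj
  set c : Fin n → Fin n → Fin n → ℝ :=
    fun j m i => if i = j then ∑ p, B j p * X p m else (d i)⁻¹ * Y i m with hc
  -- block matrix-vector multiplication
  have hmulL : ∀ (w : Fin n ⊕ Fin n → ℝ) (i : Fin n),
      (blockA d B).mulVec w (Sum.inl i) = (d i)⁻¹ * w (Sum.inr i) := by
    intro w i
    simp [blockA, Matrix.mulVec, dotProduct, Fintype.sum_sum_type,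
      Matrix.diagonal_apply, ite_mul, Finset.sum_ite_eq]
  have hmulR : ∀ (w : Fin n ⊕ Fin n → ℝ) (j : Fin n),
      (blockA d B).mulVec w (Sum.inr j) = ∑ p, B j p * w (Sum.inl p) := by
    intro w j
    simp [blockA, Matrix.mulVec, dotProduct, Fintype.sum_sum_type]
  -- rewrite each determinant appearing on the left-hand side
  have hdet : ∀ m j : Fin n,
      (Matrix.of fun i k =>
        if i = j then (Function.update v m ((blockA d B).mulVec (v m))) k (Sum.inr j)
        else (Function.update v m ((blockA d B).mulVec (v m))) k (Sum.inl i)).det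
      = ∑ k, c j m k * ((Mj j).updateRow k (Pi.single m 1)).det := by
    intro m j
    have hm : (Matrix.of fun i k =>
        if i = j then (Function.update v m ((blockA d B).mulVec (v m))) k (Sum.inr j)
        else (Function.update v m ((blockA d B).mulVec (v m))) k (Sum.inl i))
        = (Mj j).updateCol m (c j m) := by
      ext i k
      by_cases hk : k = m
      · subst hk
        by_cases hij : i = j <;>
          simp [hMj, hc, Function.update_apply, Matrix.updateCol_apply,
            Matrix.updateRow_apply, hij, hmulL, hmulR, hX, hY]
      · by_cases hij : i = j <;>
          simp [hMj, hc, Function.update_apply, Matrix.updateCol_apply,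
            Matrix.updateRow_apply, hij, hk, hX, hY]
    rw [hm, col_expand]
    exact Finset.sum_congr rfl fun k _ => by rw [key_det]
  simp only [omega2, omega1, omega3]
  calc
    ∑ m, ∑ j, (d j)⁻¹ * (Matrix.of fun i k =>
        if i = j then (Function.update v m ((blockA d B).mulVec (v m))) k (Sum.inr j)
        else (Function.update v m ((blockA d B).mulVec (v m))) k (Sum.inl i)).det
      = ∑ m, ∑ j, ∑ k, (d j)⁻¹ * (c j m k * ((Mj j).updateRow k (Pi.single m 1)).det) := by
        refine Finset.sum_congr rfl fun m _ => Finset.sum_congr rfl fun j _ => ?_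
        rw [hdet, Finset.mul_sum]
    _ = ∑ j, ∑ k, ∑ m, (d j)⁻¹ * (c j m k * ((Mj j).updateRow k (Pi.single m 1)).det) := by
        rw [Finset.sum_comm]
        exact Finset.sum_congr rfl fun j _ => Finset.sum_comm
    _ = ∑ j, ∑ k, ((if k = j then (d j)⁻¹ * (B j j * X.det) else 0) +
          (if k = j then 0 else (d j)⁻¹ * ((d k)⁻¹ * ((Mj j).updateRow k (Y k)).det))) := by
        refine Finset.sum_congr rfl fun j _ => Finset.sum_congr rfl fun k _ => ?_
        by_cases hkj : k = j
        · subst hkj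
          rw [if_pos rfl, if_pos rfl, add_zero]
          have hrow : ∀ m : Fin n, (Mj k).updateRow k (Pi.single m 1)
              = X.updateRow k (Pi.single m 1) := by
            intro m; ext a b
            by_cases ha : a = k <;>
              simp [hMj, Matrix.updateRow_apply, ha]
          have hck : ∀ m : Fin n, c k m k = ∑ p, B k p * X p m := by
            intro m; simp [hc]
          have e1 : ∑ m, (d k)⁻¹ * (c k m k * ((Mj k).updateRow k (Pi.single m 1)).det)
              = (d k)⁻¹ * ∑ p, B k p * ∑ m, X p m * (X.updateRow k (Pi.single m 1)).det := by
            rw [← Finset.mul_sum]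
            congr 1
            calc ∑ m, c k m k * ((Mj k).updateRow k (Pi.single m 1)).det
                = ∑ m, ∑ p, B k p * (X p m * (X.updateRow k (Pi.single m 1)).det) := by
                  refine Finset.sum_congr rfl fun m _ => ?_
                  rw [hck, hrow, Finset.sum_mul]
                  exact Finset.sum_congr rfl fun p _ => by ring
              _ = ∑ p, ∑ m, B k p * (X p m * (X.updateRow k (Pi.single m 1)).det) :=
                  Finset.sum_comm
              _ = ∑ p, B k p * ∑ m, X p m * (X.updateRow k (Pi.single m 1)).det :=
                  Finset.sum_congr rfl fun p _ => (Finset.mul_sum _ _ _).symm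
          rw [e1]
          congr 1
          have e2 : ∀ p : Fin n, (∑ m, X p m * (X.updateRow k (Pi.single m 1)).det)
              = (X.updateRow k (X p)).det := fun p => (row_expand X k (X p)).symm
          simp only [e2]
          rw [Finset.sum_eq_single k]
          · rw [Matrix.updateRow_eq_self]
          · intro p _ hp
            rw [Matrix.det_updateRow_eq_zero hp, mul_zero]
          · intro h; exact absurd (Finset.mem_univ k) h
        · simp only [if_neg hkj, zero_add]
          have : ∀ m : Fin n, c j m k = (d k)⁻¹ * Y k m := by
            intro m; simp [hc, hkj]
          simp only [this]
          rw [row_expand (Mj j) k (Y k), Finset.mul_sum, Finset.mul_sum]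
          exact Finset.sum_congr rfl fun m _ => by ring
    _ = (∑ i, B i i / d i) * X.det + ∑ j, ∑ k, (if j < k then
          (2 / (d j * d k)) * (Matrix.of fun i c' =>
            if i = j then v c' (Sum.inr j)
            else if i = k then v c' (Sum.inr k)
            else v c' (Sum.inl i)).det
          else 0) := by
        simp only [Finset.sum_add_distrib]
        congr 1
        · simp only [Finset.sum_ite_eq', Finset.mem_univ, if_true]
          rw [Finset.sum_mul]
          exact Finset.sum_congr rfl fun i _ => by rw [div_eq_mul_inv]; ring
        · -- the off-diagonal part equals ω₃
          set g : Fin n → Fin n → ℝ :=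
            fun j k => (d j)⁻¹ * ((d k)⁻¹ * ((Mj j).updateRow k (Y k)).det) with hg
          have gsym : ∀ j k : Fin n, j ≠ k → g j k = g k j := by
            intro j k hne
            have hmm : (Mj j).updateRow k (Y k) = (Mj k).updateRow j (Y j) := by
              ext a b
              simp only [hMj, Matrix.updateRow_apply]
              by_cases hak : a = k <;> by_cases haj : a = j
              · exact absurd (haj.symm.trans hak) hne
              · simp [hak, haj, hne, hne.symm]
              · simp [hak, haj, hne, hne.symm]
              · simp [hak, haj, hne, hne.symm]
            simp only [hg]
            rw [hmm]; ring
          have h1 : ∀ j k : Fin n, (if k = j then (0:ℝ) else g j k)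
              = (if j < k then g j k else 0) + (if k < j then g j k else 0) := by
            intro j k
            rcases lt_trichotomy j k with h | h | h
            · simp [h, h.ne', h.asymm]
            · simp [h]
            · simp [h, h.ne, h.asymm]
          change (∑ j, ∑ k, if k = j then (0:ℝ) else g j k) = _
          simp only [h1, Finset.sum_add_distrib]
          have h2 : (∑ j, ∑ k, if k < j then g j k else 0)
              = ∑ j, ∑ k, if j < k then g j k else 0 := by
            rw [Finset.sum_comm]
            refine Finset.sum_congr rfl fun j _ => Finset.sum_congr rfl fun k _ => ?_
            by_cases h : j < k
            · rw [if_pos h, if_pos h, gsym k j h.ne']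
            · rw [if_neg h, if_neg h]
          rw [h2, ← Finset.sum_add_distrib]
          refine Finset.sum_congr rfl fun j _ => ?_
          rw [← Finset.sum_add_distrib]
          refine Finset.sum_congr rfl fun k _ => ?_
          by_cases h : j < k
          · rw [if_pos h, if_pos h]
            have hne : j ≠ k := h.ne
            have hmm : (Mj j).updateRow k (Y k) = Matrix.of fun i c' =>
                if i = j then v c' (Sum.inr j)
                else if i = k then v c' (Sum.inr k)
                else v c' (Sum.inl i) := by
              ext a b
              simp only [hMj, hX, hY, Matrix.updateRow_apply, Matrix.of_apply]
              by_cases hak : a = k <;> by_cases haj : a = j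
              · exact absurd (haj.symm.trans hak) hne
              · simp [hak, haj, hne, hne.symm]
              · simp [hak, haj, hne, hne.symm]
              · simp [hak, haj, hne, hne.symm]
            simp only [hg]
            rw [hmm, div_eq_mul_inv, mul_inv]
            ring
          · rw [if_neg h, if_neg h]; simp
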